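/- Let ρ : Γ → SL(4,ℝ) be a semisimple group homomorphism. Then there exists a ρ-invariant linear subspace W of ℝ⁴ with dim W = 1 or dim W = 2. In particular, no semisimple representation of Γ on ℝ⁴ is irreducible. -/

import Mathlib

open Matrix

/-- The relations of the turnover group `Γ = ⟨a, b ∣ a³ = b³ = (ab)³ = 1⟩`. -/
def turnoverRels : Set (FreeGroup (Fin 2)) :=
  {FreeGroup.of 0 ^ 3, FreeGroup.of 1 ^ 3, (FreeGroup.of 0 * FreeGroup.of 1) ^ 3}

/-- The orbifold fundamental group of the Euclidean turnover `S²(3,3,3)`. -/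
abbrev TurnoverGroup : Type := PresentedGroup turnoverRels

/-- A representation `ρ : G → SL(n,ℝ)` is semisimple if `ℝⁿ` is a semisimple module for
the induced `ℝ[G]`-action, i.e. every `ρ`-invariant subspace admits a `ρ`-invariant
complement. -/
def IsSemisimpleRep {n : ℕ} {G : Type*} [Group G]
    (ρ : G →* Matrix.SpecialLinearGroup (Fin n) ℝ) : Prop :=
  ∀ W : Submodule ℝ (Fin n → ℝ),
    (∀ g : G, ∀ w ∈ W, (ρ g : Matrix (Fin n) (Fin n) ℝ) *ᵥ w ∈ W) →
      ∃ W' : Submodule ℝ (Fin n → ℝ),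
        (∀ g : G, ∀ w ∈ W', (ρ g : Matrix (Fin n) (Fin n) ℝ) *ᵥ w ∈ W') ∧ IsCompl W W'

namespace TurnoverProof

noncomputable section

abbrev Vr := Fin 4 → ℝ
abbrev Vc := Fin 4 → ℂ
abbrev Mr := Matrix (Fin 4) (Fin 4) ℝ
abbrev Mc := Matrix (Fin 4) (Fin 4) ℂ

/-- Coercion of real vectors into complex vectors. -/
def ι : Vr →ₗ[ℝ] Vc where
  toFun x := fun i => (x i : ℂ)
  map_add' x y := by funext i; simp
  map_smul' c x := by
    funext i
    simp [Complex.real_smul]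

/-- Entrywise complex conjugation on complex vectors. -/
def κ (y : Vc) : Vc := fun i => (starRingEnd ℂ) (y i)

/-- Complexification of a real matrix. -/
def mc (M : Mr) : Mc := M.map (algebraMap ℝ ℂ)

lemma mc_mul (M N : Mr) : mc (M * N) = mc M * mc N :=
  Matrix.map_mul

lemma mc_one : mc 1 = 1 := by
  simp [mc, Matrix.map_one]

lemma mc_mulVec (M : Mr) (x : Vr) : mc M *ᵥ ι x = ι (M *ᵥ x) := by
  funext i
  simpa [mc, ι, Function.comp_def] using (RingHom.map_mulVec (algebraMap ℝ ℂ) M x i).symm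

lemma κ_add (x y : Vc) : κ (x + y) = κ x + κ y := by
  funext i; simp [κ]

lemma κ_smul (c : ℂ) (x : Vc) : κ (c • x) = (starRingEnd ℂ) c • κ x := by
  funext i; simp [κ]

lemma κ_zero : κ 0 = 0 := by funext i; simp [κ]

lemma κ_κ (x : Vc) : κ (κ x) = x := by funext i; simp [κ]

lemma κ_eq_zero {x : Vc} : κ x = 0 ↔ x = 0 := by
  constructor
  · intro h
    have := congrArg κ h
    rwa [κ_κ, κ_zero] at this
  · rintro rfl; exact κ_zero

lemma κ_mulVec (M : Mr) (x : Vc) : κ (mc M *ᵥ x) = mc M *ᵥ κ x := by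
  funext i
  simp only [κ, mc, Matrix.mulVec, dotProduct, Matrix.map_apply, map_sum, _root_.map_mul]
  congr 1
  funext j
  simp [Complex.conj_ofReal]

/-- A subspace spanned by a set closed under a matrix action is invariant. -/
lemma span_stable (M : Mc) (s : Set Vc) (h : ∀ x ∈ s, M *ᵥ x ∈ Submodule.span ℂ s) :
    ∀ y ∈ Submodule.span ℂ s, M *ᵥ y ∈ Submodule.span ℂ s := by
  intro y hy
  induction hy using Submodule.span_induction with
  | mem x hx => exact h x hx
  | zero => rw [Matrix.mulVec_zero]; exact Submodule.zero_mem _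
  | add x y _ _ hx hy => rw [Matrix.mulVec_add]; exact Submodule.add_mem _ hx hy
  | smul c x _ hx => rw [Matrix.mulVec_smul]; exact Submodule.smul_mem _ _ hx

/-- Conjugation maps a span into the span of a set containing conjugates of generators. -/
lemma span_conj_stable (s t : Set Vc) (h : ∀ x ∈ s, κ x ∈ Submodule.span ℂ t) :
    ∀ y ∈ Submodule.span ℂ s, κ y ∈ Submodule.span ℂ t := by
  intro y hy
  induction hy using Submodule.span_induction with
  | mem x hx => exact h x hx
  | zero => rw [κ_zero]; exact Submodule.zero_mem _
  | add x y _ _ hx hy => rw [κ_add]; exact Submodule.add_mem _ hx hy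
  | smul c x _ hx => rw [κ_smul]; exact Submodule.smul_mem _ _ hx

/-- Invariance under a matrix with a two-sided inverse implies invariance under the inverse. -/
lemma invariant_inv {M N : Mr} (hMN : M * N = 1) (hNM : N * M = 1)
    (W : Submodule ℝ Vr) (h : ∀ w ∈ W, M *ᵥ w ∈ W) : ∀ w ∈ W, N *ᵥ w ∈ W := by
  classical
  let e : Vr ≃ₗ[ℝ] Vr :=
    LinearEquiv.ofLinear M.mulVecLin N.mulVecLin
      (LinearMap.ext fun x => by
        simp [Matrix.mulVecLin_apply, Matrix.mulVec_mulVec, hMN, Matrix.one_mulVec])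
      (LinearMap.ext fun x => by
        simp [Matrix.mulVecLin_apply, Matrix.mulVec_mulVec, hNM, Matrix.one_mulVec])
  have hle : W.map (e : Vr →ₗ[ℝ] Vr) ≤ W := by
    rintro x ⟨w, hw, rfl⟩
    exact h w hw
  have hfr : Module.finrank ℝ (W.map (e : Vr →ₗ[ℝ] Vr)) = Module.finrank ℝ W :=
    LinearEquiv.finrank_map_eq e W
  have heq : W.map (e : Vr →ₗ[ℝ] Vr) = W :=
    Submodule.eq_of_le_of_finrank_le hle hfr.ge
  intro w hw
  have hw' : w ∈ W.map (e : Vr →ₗ[ℝ] Vr) := heq.symm ▸ hw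
  obtain ⟨u, hu, hux⟩ := hw'
  have : N *ᵥ w = u := by
    have : (e : Vr →ₗ[ℝ] Vr) u = M *ᵥ u := rfl
    rw [← hux, this, Matrix.mulVec_mulVec, hNM, Matrix.one_mulVec]
  rwa [this]

/-- Existence of an eigenvector of a matrix inside a nonzero invariant subspace. -/
lemma exists_eigen_in (M : Mc) (E : Submodule ℂ Vc) (hE : E ≠ ⊥)
    (hME : ∀ x ∈ E, M *ᵥ x ∈ E) :
    ∃ (w : Vc) (a : ℂ), w ∈ E ∧ w ≠ 0 ∧ M *ᵥ w = a • w := by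
  haveI : Nontrivial E := Submodule.nontrivial_iff_ne_bot.mpr hE
  have hME' : ∀ x ∈ E, M.mulVecLin x ∈ E := by
    intro x hx; simpa [Matrix.mulVecLin_apply] using hME x hx
  obtain ⟨a, ha⟩ := Module.End.exists_eigenvalue (M.mulVecLin.restrict hME')
  obtain ⟨w, hw⟩ := ha.exists_hasEigenvector
  refine ⟨(w : Vc), a, w.2, ?_, ?_⟩
  · intro h
    exact hw.2 (Subtype.coe_injective (by simpa using h))
  · have h1 := hw.apply_eq_smul
    have h2 := congrArg (Subtype.val) h1
    simpa [LinearMap.restrict_coe_apply, Matrix.mulVecLin_apply] using h2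

/-- A joint eigenvector of two commuting complex matrices. -/
lemma exists_joint_eigen (T S : Mc) (hTS : T * S = S * T) :
    ∃ (v : Vc) (l m : ℂ), v ≠ 0 ∧ T *ᵥ v = l • v ∧ S *ᵥ v = m • v := by
  obtain ⟨v₀, l, _, hv₀, hTv₀⟩ := exists_eigen_in T ⊤ (by
    intro h
    have : (fun i => (1 : ℂ) : Vc) ∈ (⊤ : Submodule ℂ Vc) := Submodule.mem_top
    rw [h] at this
    have := (Submodule.mem_bot ℂ).mp this
    have := congrFun this 0
    simp at this) (fun x _ => Submodule.mem_top)
  -- eigenspace of T for eigenvalue l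
  let E : Submodule ℂ Vc := LinearMap.ker (T.mulVecLin - l • LinearMap.id)
  have hmemE : ∀ x : Vc, x ∈ E ↔ T *ᵥ x = l • x := by
    intro x
    simp only [E, LinearMap.mem_ker, LinearMap.sub_apply, Matrix.mulVecLin_apply,
      LinearMap.smul_apply, LinearMap.id_apply, sub_eq_zero]
  have hE : E ≠ ⊥ := by
    intro h
    have : v₀ ∈ E := (hmemE v₀).mpr hTv₀
    rw [h, Submodule.mem_bot] at this
    exact hv₀ this
  have hSE : ∀ x ∈ E, S *ᵥ x ∈ E := by
    intro x hx
    rw [hmemE] at hx ⊢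
    calc T *ᵥ (S *ᵥ x) = (T * S) *ᵥ x := (Matrix.mulVec_mulVec x T S)
      _ = (S * T) *ᵥ x := by rw [hTS]
      _ = S *ᵥ (T *ᵥ x) := (Matrix.mulVec_mulVec x S T).symm
      _ = S *ᵥ (l • x) := by rw [hx]
      _ = l • (S *ᵥ x) := Matrix.mulVec_smul S l x
  obtain ⟨w, m, hwE, hw0, hSw⟩ := exists_eigen_in S E hE hSE
  exact ⟨w, l, m, hw0, (hmemE w).mp hwE, hSw⟩

/-- Joint eigenvectors of a commuting pair with pairwise distinct joint eigenvalue
pairs are linearly independent. -/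
lemma indep_triple (T S : Mc) (v1 v2 v3 : Vc) (l1 l2 l3 m1 m2 m3 : ℂ)
    (h1 : v1 ≠ 0) (h2 : v2 ≠ 0) (h3 : v3 ≠ 0)
    (hT1 : T *ᵥ v1 = l1 • v1) (hT2 : T *ᵥ v2 = l2 • v2) (hT3 : T *ᵥ v3 = l3 • v3)
    (hS1 : S *ᵥ v1 = m1 • v1) (hS2 : S *ᵥ v2 = m2 • v2) (hS3 : S *ᵥ v3 = m3 • v3)
    (d12 : (l1, m1) ≠ (l2, m2)) (d13 : (l1, m1) ≠ (l3, m3)) (d23 : (l2, m2) ≠ (l3, m3)) :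
    LinearIndependent ℂ ![v1, v2, v3] := by
  classical
  have key : ∀ (w1 w2 w3 : Vc) (a1 a2 a3 b1 b2 b3 : ℂ),
      w1 ≠ 0 →
      T *ᵥ w1 = a1 • w1 → T *ᵥ w2 = a2 • w2 → T *ᵥ w3 = a3 • w3 →
      S *ᵥ w1 = b1 • w1 → S *ᵥ w2 = b2 • w2 → S *ᵥ w3 = b3 • w3 →
      (a1, b1) ≠ (a2, b2) → (a1, b1) ≠ (a3, b3) →
      ∀ c1 c2 c3 : ℂ, c1 • w1 + c2 • w2 + c3 • w3 = 0 → c1 = 0 := by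
    intro w1 w2 w3 a1 a2 a3 b1 b2 b3 hw1 hTw1 hTw2 hTw3 hSw1 hSw2 hSw3 hd2 hd3 c1 c2 c3 heq
    -- killing operator for a target pair (a, b)
    have kill : ∀ (a b : ℂ), (a1, b1) ≠ (a, b) →
        ∃ P : Mc, ∃ f : ℂ → ℂ → ℂ,
          (∀ (w : Vc) (x y : ℂ), T *ᵥ w = x • w → S *ᵥ w = y • w → P *ᵥ w = f x y • w) ∧
          f a1 b1 ≠ 0 ∧ f a b = 0 := by
      intro a b hd
      by_cases hc : a1 = a
      · refine ⟨S - b • 1, fun x y => y - b, ?_, ?_, by ring⟩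
        · intro w x y hTw hSw
          rw [Matrix.sub_mulVec, hSw, Matrix.smul_mulVec, Matrix.one_mulVec, sub_smul]
        · intro h
          exact hd (Prod.ext hc (by linear_combination h))
      · refine ⟨T - a • 1, fun x y => x - a, ?_, ?_, by ring⟩
        · intro w x y hTw hSw
          rw [Matrix.sub_mulVec, hTw, Matrix.smul_mulVec, Matrix.one_mulVec, sub_smul]
        · exact sub_ne_zero.mpr hc
    obtain ⟨P2, f2, hP2, hf2_1, hf2_2⟩ := kill a2 b2 hd2
    obtain ⟨P3, f3, hP3, hf3_1, hf3_3⟩ := kill a3 b3 hd3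
    -- apply P3 then P2 to the relation
    have step1 : c1 • (f3 a1 b1 • w1) + c2 • (f3 a2 b2 • w2) + c3 • (f3 a3 b3 • w3) = 0 := by
      have := congrArg (fun z => P3 *ᵥ z) heq
      simpa [Matrix.mulVec_add, Matrix.mulVec_smul, hP3 w1 a1 b1 hTw1 hSw1,
        hP3 w2 a2 b2 hTw2 hSw2, hP3 w3 a3 b3 hTw3 hSw3, Matrix.mulVec_zero] using this
    rw [hf3_3, zero_smul, smul_zero, add_zero] at step1
    have step2 : c1 • (f2 a1 b1 • (f3 a1 b1 • w1)) + c2 • (f2 a2 b2 • (f3 a2 b2 • w2)) = 0 := by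
      have := congrArg (fun z => P2 *ᵥ z) step1
      have e1 : P2 *ᵥ (f3 a1 b1 • w1) = f3 a1 b1 • (f2 a1 b1 • w1) := by
        rw [Matrix.mulVec_smul, hP2 w1 a1 b1 hTw1 hSw1]
      have e2 : P2 *ᵥ (f3 a2 b2 • w2) = f3 a2 b2 • (f2 a2 b2 • w2) := by
        rw [Matrix.mulVec_smul, hP2 w2 a2 b2 hTw2 hSw2]
      simp only [Matrix.mulVec_add, Matrix.mulVec_smul, e1, e2, Matrix.mulVec_zero] at this
      rw [smul_comm (f3 a1 b1) (f2 a1 b1), smul_comm (f3 a2 b2) (f2 a2 b2)] at this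
      exact this
    rw [hf2_2, zero_smul, smul_zero, add_zero] at step2
    have : (c1 * (f2 a1 b1 * f3 a1 b1)) • w1 = 0 := by
      rw [← smul_smul, ← smul_smul]; exact step2
    rcases smul_eq_zero.mp this with h | h
    · rcases mul_eq_zero.mp h with h' | h'
      · exact h'
      · rcases mul_eq_zero.mp h' with h'' | h''
        · exact absurd h'' hf2_1
        · exact absurd h'' hf3_1
    · exact absurd h hw1
  rw [Fintype.linearIndependent_iff]
  intro g hg
  have hsum : g 0 • v1 + g 1 • v2 + g 2 • v3 = 0 := by
    have := hg
    rw [Fin.sum_univ_three] at this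
    simpa using this
  intro i
  fin_cases i
  · exact key v1 v2 v3 l1 l2 l3 m1 m2 m3 h1 hT1 hT2 hT3 hS1 hS2 hS3 d12 d13
      (g 0) (g 1) (g 2) hsum
  · refine key v2 v1 v3 l2 l1 l3 m2 m1 m3 h2 hT2 hT1 hT3 hS2 hS1 hS3 d12.symm d23
      (g 1) (g 0) (g 2) ?_
    rw [← hsum]; module
  · refine key v3 v1 v2 l3 l1 l2 m3 m1 m2 h3 hT3 hT1 hT2 hS3 hS1 hS2 d13.symm d23.symm
      (g 2) (g 0) (g 1) ?_
    rw [← hsum]; module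

/-- The key consequences of the turnover relations: with `t = a b⁻¹`, `s = a t a⁻¹`,
the "translations" `t` and `s` commute, conjugation by `a` cycles them, and `t b = a`. -/
lemma turnover_idents {G : Type*} [Group G] {a b : G} (ha : a ^ 3 = 1) (hb : b ^ 3 = 1)
    (hab : (a * b) ^ 3 = 1) :
    (a * b⁻¹) * (a * (a * b⁻¹) * a⁻¹) = (a * (a * b⁻¹) * a⁻¹) * (a * b⁻¹) ∧
    a * ((a * b⁻¹) * (a * (a * b⁻¹) * a⁻¹))⁻¹ = (a * b⁻¹) * a := by
  have ha3 : (a * a) * a = 1 := by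
    have h := ha
    rw [pow_succ, pow_succ, pow_one] at h
    exact h
  have hb3 : (b * b) * b = 1 := by
    have h := hb
    rw [pow_succ, pow_succ, pow_one] at h
    exact h
  have hab3 : ((a * b) * (a * b)) * (a * b) = 1 := by
    have h := hab
    rw [pow_succ, pow_succ, pow_one] at h
    exact h
  have ha' : a * a = a⁻¹ := eq_inv_of_mul_eq_one_left ha3
  have hb' : b * b = b⁻¹ := eq_inv_of_mul_eq_one_left hb3
  have hb'' : b⁻¹ * b⁻¹ = b := by
    have h : b⁻¹ * b⁻¹ = (b * b)⁻¹ := by group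
    rw [h, hb', inv_inv]
  have L1 : a * b * a = (b * a * b)⁻¹ := by
    have h : (a * b * a) * (b * a * b) = 1 := by rw [← hab3]; group
    exact eq_inv_of_mul_eq_one_left h
  have h2 : b⁻¹ * a⁻¹ * b⁻¹ = a * b * a := by rw [L1]; group
  have hts : (a * b⁻¹) * (a * (a * b⁻¹) * a⁻¹) = a⁻¹ * b := by
    calc (a * b⁻¹) * (a * (a * b⁻¹) * a⁻¹)
        = a * (b⁻¹ * (a * a) * b⁻¹) * a⁻¹ := by group
      _ = a * (b⁻¹ * a⁻¹ * b⁻¹) * a⁻¹ := by rw [ha']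
      _ = a * (a * b * a) * a⁻¹ := by rw [h2]
      _ = (a * a) * b := by group
      _ = a⁻¹ * b := by rw [ha']
  have hst : (a * (a * b⁻¹) * a⁻¹) * (a * b⁻¹) = a⁻¹ * b := by
    calc (a * (a * b⁻¹) * a⁻¹) * (a * b⁻¹)
        = (a * a) * (b⁻¹ * b⁻¹) := by group
      _ = a⁻¹ * b := by rw [ha', hb'']
  refine ⟨hts.trans hst.symm, ?_⟩
  rw [hts]
  group

/-- Produce a nonzero proper conjugation-stable subspace of `ℂ⁴` invariant under
`A` and `T`, given the matrix relations coming from the turnover group. -/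
lemma exists_Y (Ac Tc Sc Rc : Mc)
    (hTS : Tc * Sc = Sc * Tc)
    (hAT : Ac * Tc = Sc * Ac)
    (hAR : Ac * Rc = Tc * Ac)
    (hR : Rc * (Tc * Sc) = 1)
    (hA3 : (Ac * Ac) * Ac = 1)
    (hκA : ∀ x, κ (Ac *ᵥ x) = Ac *ᵥ κ x)
    (hκT : ∀ x, κ (Tc *ᵥ x) = Tc *ᵥ κ x)
    (hκS : ∀ x, κ (Sc *ᵥ x) = Sc *ᵥ κ x) :
    ∃ Y : Submodule ℂ Vc, Y ≠ ⊥ ∧ Y ≠ ⊤ ∧ (∀ y ∈ Y, κ y ∈ Y) ∧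
      (∀ y ∈ Y, Ac *ᵥ y ∈ Y) ∧ (∀ y ∈ Y, Tc *ᵥ y ∈ Y) := by
  classical
  have hTSx : ∀ (x : Vc) (p q : ℂ), Tc *ᵥ x = p • x → Sc *ᵥ x = q • x →
      (Tc * Sc) *ᵥ x = (p * q) • x := by
    intro x p q hT hS
    rw [← Matrix.mulVec_mulVec, hS, Matrix.mulVec_smul, hT, smul_smul, mul_comm]
  have hRx : ∀ (x : Vc) (p q : ℂ), Tc *ᵥ x = p • x → Sc *ᵥ x = q • x →
      (p * q) • (Rc *ᵥ x) = x := by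
    intro x p q hT hS
    calc (p * q) • (Rc *ᵥ x) = Rc *ᵥ ((p * q) • x) := (Matrix.mulVec_smul _ _ _).symm
      _ = Rc *ᵥ ((Tc * Sc) *ᵥ x) := by rw [hTSx x p q hT hS]
      _ = (Rc * (Tc * Sc)) *ᵥ x := Matrix.mulVec_mulVec x Rc (Tc * Sc)
      _ = x := by rw [hR, Matrix.one_mulVec]
  have hTA : ∀ x : Vc, Tc *ᵥ (Ac *ᵥ x) = Ac *ᵥ (Rc *ᵥ x) := by
    intro x
    rw [Matrix.mulVec_mulVec, Matrix.mulVec_mulVec, hAR]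
  have hSA : ∀ x : Vc, Sc *ᵥ (Ac *ᵥ x) = Ac *ᵥ (Tc *ᵥ x) := by
    intro x
    rw [Matrix.mulVec_mulVec, Matrix.mulVec_mulVec, hAT]
  obtain ⟨v, l, m, hv0, hTv, hSv⟩ := exists_joint_eigen Tc Sc hTS
  have hml : (l * m) • (Rc *ᵥ v) = v := hRx v l m hTv hSv
  have hlm0 : l * m ≠ 0 := by
    intro h
    rw [h, zero_smul] at hml
    exact hv0 hml.symm
  have hl0 : l ≠ 0 := fun h => hlm0 (by rw [h, zero_mul])
  have hm0 : m ≠ 0 := fun h => hlm0 (by rw [h, mul_zero])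
  have hRv : Rc *ᵥ v = (l * m)⁻¹ • v := by
    have h := congrArg (fun z => (l * m)⁻¹ • z) hml
    simp only [smul_smul] at h
    rw [inv_mul_cancel₀ hlm0, one_smul] at h
    exact h
  by_cases hcase : (l * m)⁻¹ = l ∧ l = m
  · -- the eigenvalue pair is fixed: `l = m`, `l³ = 1`
    obtain ⟨hc1, hc2⟩ := hcase
    subst hc2
    have hll : l * l = l⁻¹ := by
      have h := congrArg Inv.inv hc1
      rwa [inv_inv] at h
    have hl3 : l * (l * l) = 1 := by rw [hll, mul_inv_cancel₀ hl0]
    -- the joint eigenspace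
    set E : Submodule ℂ Vc := LinearMap.ker (Tc.mulVecLin - l • LinearMap.id) ⊓
      LinearMap.ker (Sc.mulVecLin - l • LinearMap.id) with hE
    have hmemE : ∀ x : Vc, x ∈ E ↔ (Tc *ᵥ x = l • x ∧ Sc *ᵥ x = l • x) := by
      intro x
      simp only [hE, Submodule.mem_inf, LinearMap.mem_ker, LinearMap.sub_apply,
        Matrix.mulVecLin_apply, LinearMap.smul_apply, LinearMap.id_apply, sub_eq_zero]
    have hvE : v ∈ E := (hmemE v).mpr ⟨hTv, hSv⟩
    have hE0 : E ≠ ⊥ := by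
      intro h
      rw [h, Submodule.mem_bot] at hvE
      exact hv0 hvE
    have hAE : ∀ x ∈ E, Ac *ᵥ x ∈ E := by
      intro x hx
      obtain ⟨hTx, hSx⟩ := (hmemE x).mp hx
      have hRx' : Rc *ᵥ x = l • x := by
        have h := hRx x l l hTx hSx
        have h2 := congrArg (fun z => l • z) h
        simp only [smul_smul] at h2
        rwa [← mul_assoc, mul_assoc, hl3, one_smul] at h2
      rw [hmemE]
      constructor
      · rw [hTA, hRx', Matrix.mulVec_smul]
      · rw [hSA, hTx, Matrix.mulVec_smul]
    obtain ⟨w, α, hwE, hw0, hAw⟩ := exists_eigen_in Ac E hE0 hAE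
    obtain ⟨hTw, hSw⟩ := (hmemE w).mp hwE
    set Y : Submodule ℂ Vc := Submodule.span ℂ (Set.range ![w, κ w]) with hYdef
    have hwmem : w ∈ Y := Submodule.subset_span ⟨0, rfl⟩
    have hκwmem : κ w ∈ Y := Submodule.subset_span ⟨1, rfl⟩
    have hAκw : Ac *ᵥ κ w = (starRingEnd ℂ) α • κ w := by
      rw [← hκA, hAw, κ_smul]
    have hTκw : Tc *ᵥ κ w = (starRingEnd ℂ) l • κ w := by
      rw [← hκT, hTw, κ_smul]
    have hgen : ∀ x ∈ Set.range ![w, κ w], x = w ∨ x = κ w := by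
      rintro x ⟨i, rfl⟩
      fin_cases i
      · left; rfl
      · right; rfl
    refine ⟨Y, ?_, ?_, ?_, ?_, ?_⟩
    · intro h
      rw [h, Submodule.mem_bot] at hwmem
      exact hw0 hwmem
    · intro h
      have h1 : Module.finrank ℂ Y ≤ 2 := by
        have := finrank_range_le_card (R := ℂ) ![w, κ w]
        simpa [Set.finrank, hYdef] using this
      rw [h, finrank_top, Module.finrank_fin_fun] at h1
      omega
    · exact span_conj_stable _ _ (by
        rintro x hx
        rcases hgen x hx with rfl | rfl
        · exact hκwmem
        · rw [κ_κ]; exact hwmem)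
    · exact span_stable Ac _ (by
        rintro x hx
        rcases hgen x hx with rfl | rfl
        · rw [hAw]; exact Submodule.smul_mem _ _ hwmem
        · rw [hAκw]; exact Submodule.smul_mem _ _ hκwmem)
    · exact span_stable Tc _ (by
        rintro x hx
        rcases hgen x hx with rfl | rfl
        · rw [hTw]; exact Submodule.smul_mem _ _ hwmem
        · rw [hTκw]; exact Submodule.smul_mem _ _ hκwmem)
  · -- the eigenvalue pair has a free orbit of size 3
    set u1 : Vc := Ac *ᵥ v with hu1def
    set u2 : Vc := Ac *ᵥ u1 with hu2def
    have hAu2 : Ac *ᵥ u2 = v := by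
      rw [hu2def, hu1def, Matrix.mulVec_mulVec, Matrix.mulVec_mulVec, hA3, Matrix.one_mulVec]
    have hu20 : u2 ≠ 0 := by
      intro h
      rw [h, Matrix.mulVec_zero] at hAu2
      exact hv0 hAu2.symm
    have hu10 : u1 ≠ 0 := by
      intro h
      rw [hu2def, h, Matrix.mulVec_zero] at hu20
      exact hu20 rfl
    have hTu1 : Tc *ᵥ u1 = (l * m)⁻¹ • u1 := by
      rw [hu1def, hTA, hRv, Matrix.mulVec_smul]
    have hSu1 : Sc *ᵥ u1 = l • u1 := by
      rw [hu1def, hSA, hTv, Matrix.mulVec_smul]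
    have hRu1 : Rc *ᵥ u1 = m • u1 := by
      have h := hRx u1 ((l * m)⁻¹) l hTu1 hSu1
      have hcoef : (l * m)⁻¹ * l = m⁻¹ := by
        field_simp
      rw [hcoef] at h
      have h2 := congrArg (fun z => m • z) h
      simp only [smul_smul] at h2
      rw [mul_inv_cancel₀ hm0, one_smul] at h2
      exact h2
    have hTu2 : Tc *ᵥ u2 = m • u2 := by
      rw [hu2def, hTA, hRu1, Matrix.mulVec_smul]
    have hSu2 : Sc *ᵥ u2 = (l * m)⁻¹ • u2 := by
      rw [hu2def, hSA, hTu1, Matrix.mulVec_smul]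
    -- the three eigenvalue pairs are pairwise distinct
    have d12 : (l, m) ≠ ((l * m)⁻¹, l) := by
      intro h
      rw [Prod.mk.injEq] at h
      exact hcase ⟨h.1.symm, h.2.symm⟩
    have d13 : (l, m) ≠ (m, (l * m)⁻¹) := by
      intro h
      rw [Prod.mk.injEq] at h
      refine hcase ⟨?_, h.1⟩
      rw [← h.2]
      exact h.1.symm
    have d23 : ((l * m)⁻¹, l) ≠ (m, (l * m)⁻¹) := by
      intro h
      rw [Prod.mk.injEq] at h
      exact hcase ⟨h.2.symm, h.2.trans h.1⟩
    have hindep : LinearIndependent ℂ ![v, u1, u2] :=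
      indep_triple Tc Sc v u1 u2 l ((l * m)⁻¹) m m l ((l * m)⁻¹)
        hv0 hu10 hu20 hTv hTu1 hTu2 hSv hSu1 hSu2 d12 d13 d23
    -- conjugated data
    have hκv0 : κ v ≠ 0 := fun h => hv0 (κ_eq_zero.mp h)
    have hκu10 : κ u1 ≠ 0 := fun h => hu10 (κ_eq_zero.mp h)
    have hκu20 : κ u2 ≠ 0 := fun h => hu20 (κ_eq_zero.mp h)
    have hκTv : Tc *ᵥ κ v = (starRingEnd ℂ) l • κ v := by rw [← hκT, hTv, κ_smul]
    have hκTu1 : Tc *ᵥ κ u1 = (starRingEnd ℂ) ((l * m)⁻¹) • κ u1 := by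
      rw [← hκT, hTu1, κ_smul]
    have hκTu2 : Tc *ᵥ κ u2 = (starRingEnd ℂ) m • κ u2 := by rw [← hκT, hTu2, κ_smul]
    have hκSv : Sc *ᵥ κ v = (starRingEnd ℂ) m • κ v := by rw [← hκS, hSv, κ_smul]
    have hκSu1 : Sc *ᵥ κ u1 = (starRingEnd ℂ) l • κ u1 := by rw [← hκS, hSu1, κ_smul]
    have hκSu2 : Sc *ᵥ κ u2 = (starRingEnd ℂ) ((l * m)⁻¹) • κ u2 := by
      rw [← hκS, hSu2, κ_smul]
    have hconj_ne : ∀ p q : ℂ × ℂ, p ≠ q →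
        ((starRingEnd ℂ) p.1, (starRingEnd ℂ) p.2) ≠ ((starRingEnd ℂ) q.1, (starRingEnd ℂ) q.2) := by
      intro p q hpq h
      rw [Prod.mk.injEq] at h
      exact hpq (Prod.ext ((starRingEnd ℂ).injective h.1) ((starRingEnd ℂ).injective h.2))
    have hκindep : LinearIndependent ℂ ![κ v, κ u1, κ u2] :=
      indep_triple Tc Sc (κ v) (κ u1) (κ u2)
        ((starRingEnd ℂ) l) ((starRingEnd ℂ) ((l * m)⁻¹)) ((starRingEnd ℂ) m)
        ((starRingEnd ℂ) m) ((starRingEnd ℂ) l) ((starRingEnd ℂ) ((l * m)⁻¹))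
        hκv0 hκu10 hκu20 hκTv hκTu1 hκTu2 hκSv hκSu1 hκSu2
        (hconj_ne _ _ d12) (hconj_ne _ _ d13) (hconj_ne _ _ d23)
    set Z : Submodule ℂ Vc := Submodule.span ℂ (Set.range ![v, u1, u2]) with hZdef
    set Zc : Submodule ℂ Vc := Submodule.span ℂ (Set.range ![κ v, κ u1, κ u2]) with hZcdef
    have hfrZ : Module.finrank ℂ Z = 3 := by
      rw [hZdef, finrank_span_eq_card hindep]
      simp
    have hfrZc : Module.finrank ℂ Zc = 3 := by
      rw [hZcdef, finrank_span_eq_card hκindep]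
      simp
    have hgenZ : ∀ x ∈ Set.range ![v, u1, u2], x = v ∨ x = u1 ∨ x = u2 := by
      rintro x ⟨i, rfl⟩
      fin_cases i
      · exact Or.inl rfl
      · exact Or.inr (Or.inl rfl)
      · exact Or.inr (Or.inr rfl)
    have hgenZc : ∀ x ∈ Set.range ![κ v, κ u1, κ u2], x = κ v ∨ x = κ u1 ∨ x = κ u2 := by
      rintro x ⟨i, rfl⟩
      fin_cases i
      · exact Or.inl rfl
      · exact Or.inr (Or.inl rfl)
      · exact Or.inr (Or.inr rfl)
    have hvZ : v ∈ Z := Submodule.subset_span ⟨0, rfl⟩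
    have hu1Z : u1 ∈ Z := Submodule.subset_span ⟨1, rfl⟩
    have hu2Z : u2 ∈ Z := Submodule.subset_span ⟨2, rfl⟩
    have hκvZc : κ v ∈ Zc := Submodule.subset_span ⟨0, rfl⟩
    have hκu1Zc : κ u1 ∈ Zc := Submodule.subset_span ⟨1, rfl⟩
    have hκu2Zc : κ u2 ∈ Zc := Submodule.subset_span ⟨2, rfl⟩
    have hAZ : ∀ y ∈ Z, Ac *ᵥ y ∈ Z := span_stable Ac _ (by
      rintro x hx
      rcases hgenZ x hx with rfl | rfl | rfl
      · exact hu1Z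
      · exact hu2Z
      · rw [hAu2]; exact hvZ)
    have hTZ : ∀ y ∈ Z, Tc *ᵥ y ∈ Z := span_stable Tc _ (by
      rintro x hx
      rcases hgenZ x hx with rfl | rfl | rfl
      · rw [hTv]; exact Submodule.smul_mem _ _ hvZ
      · rw [hTu1]; exact Submodule.smul_mem _ _ hu1Z
      · rw [hTu2]; exact Submodule.smul_mem _ _ hu2Z)
    have hAZc : ∀ y ∈ Zc, Ac *ᵥ y ∈ Zc := span_stable Ac _ (by
      rintro x hx
      rcases hgenZc x hx with rfl | rfl | rfl
      · rw [← hκA, hu1def]; exact hκu1Zc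
      · rw [← hκA, ← hu2def]; exact hκu2Zc
      · rw [← hκA, hAu2]; exact hκvZc)
    have hTZc : ∀ y ∈ Zc, Tc *ᵥ y ∈ Zc := span_stable Tc _ (by
      rintro x hx
      rcases hgenZc x hx with rfl | rfl | rfl
      · rw [hκTv]; exact Submodule.smul_mem _ _ hκvZc
      · rw [hκTu1]; exact Submodule.smul_mem _ _ hκu1Zc
      · rw [hκTu2]; exact Submodule.smul_mem _ _ hκu2Zc)
    have hκZ : ∀ y ∈ Z, κ y ∈ Zc := span_conj_stable _ _ (by
      rintro x hx
      rcases hgenZ x hx with rfl | rfl | rfl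
      · exact hκvZc
      · exact hκu1Zc
      · exact hκu2Zc)
    have hκZc : ∀ y ∈ Zc, κ y ∈ Z := span_conj_stable _ _ (by
      rintro x hx
      rcases hgenZc x hx with rfl | rfl | rfl
      · rw [κ_κ]; exact hvZ
      · rw [κ_κ]; exact hu1Z
      · rw [κ_κ]; exact hu2Z)
    refine ⟨Z ⊓ Zc, ?_, ?_, ?_, ?_, ?_⟩
    · -- nonzero by dimension count
      intro h
      have hsum := Submodule.finrank_sup_add_finrank_inf_eq Z Zc
      have hsup : Module.finrank ℂ ↥(Z ⊔ Zc) ≤ 4 := by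
        have := Submodule.finrank_le (Z ⊔ Zc)
        rwa [Module.finrank_fin_fun] at this
      rw [h, finrank_bot, hfrZ, hfrZc] at hsum
      omega
    · intro h
      have hle : Z ⊓ Zc ≤ Z := inf_le_left
      rw [h] at hle
      have hZtop : Z = ⊤ := top_le_iff.mp hle
      rw [hZtop, finrank_top, Module.finrank_fin_fun] at hfrZ
      omega
    · intro y hy
      obtain ⟨h1, h2⟩ := Submodule.mem_inf.mp hy
      exact Submodule.mem_inf.mpr ⟨hκZc y h2, hκZ y h1⟩
    · intro y hy
      obtain ⟨h1, h2⟩ := Submodule.mem_inf.mp hy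
      exact Submodule.mem_inf.mpr ⟨hAZ y h1, hAZc y h2⟩
    · intro y hy
      obtain ⟨h1, h2⟩ := Submodule.mem_inf.mp hy
      exact Submodule.mem_inf.mpr ⟨hTZ y h1, hTZc y h2⟩

/-- Real points of a conjugation-stable complex subspace. -/
lemma realize (Ar Tr : Mr) (Y : Submodule ℂ Vc) (hY0 : Y ≠ ⊥) (hYt : Y ≠ ⊤)
    (hconj : ∀ y ∈ Y, κ y ∈ Y)
    (hAY : ∀ y ∈ Y, mc Ar *ᵥ y ∈ Y) (hTY : ∀ y ∈ Y, mc Tr *ᵥ y ∈ Y) :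
    ∃ W : Submodule ℝ Vr, W ≠ ⊥ ∧ Module.finrank ℝ W ≤ 3 ∧
      (∀ w ∈ W, Ar *ᵥ w ∈ W) ∧ (∀ w ∈ W, Tr *ᵥ w ∈ W) := by
  classical
  set W : Submodule ℝ Vr := (Y.restrictScalars ℝ).comap ι with hWdef
  have hmem : ∀ x : Vr, x ∈ W ↔ ι x ∈ Y := fun x => Iff.rfl
  have hWne : W ≠ ⊥ := by
    obtain ⟨y, hyY, hy0⟩ := (Submodule.ne_bot_iff Y).mp hY0
    set xr : Vr := fun i => (y i).re with hxr
    set xi : Vr := fun i => (y i).im with hxi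
    have h1 : ι xr = (2 : ℂ)⁻¹ • (y + κ y) := by
      funext i
      have := Complex.add_conj (y i)
      simp only [ι, κ, LinearMap.coe_mk, AddHom.coe_mk, Pi.smul_apply, Pi.add_apply,
        smul_eq_mul, hxr]
      rw [this]
      push_cast
      ring
    have h2 : ι xi = (2 * Complex.I)⁻¹ • (y - κ y) := by
      funext i
      have := Complex.sub_conj (y i)
      simp only [ι, κ, LinearMap.coe_mk, AddHom.coe_mk, Pi.smul_apply, Pi.sub_apply,
        smul_eq_mul, hxi]
      rw [this]
      have hI : (2 : ℂ) * Complex.I ≠ 0 := by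
        simp [Complex.I_ne_zero]
      field_simp
      push_cast
      ring
    have hxrY : ι xr ∈ Y := by
      rw [h1]
      exact Submodule.smul_mem _ _ (Submodule.add_mem _ hyY (hconj y hyY))
    have hxiY : ι xi ∈ Y := by
      rw [h2]
      exact Submodule.smul_mem _ _ (Submodule.sub_mem _ hyY (hconj y hyY))
    have hne : xr ≠ 0 ∨ xi ≠ 0 := by
      by_contra h
      push_neg at h
      apply hy0
      funext i
      have h1' : (y i).re = 0 := congrFun h.1 i
      have h2' : (y i).im = 0 := congrFun h.2 i
      exact Complex.ext h1' h2'
    rcases hne with h | h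
    · exact (Submodule.ne_bot_iff W).mpr ⟨xr, (hmem xr).mpr hxrY, h⟩
    · exact (Submodule.ne_bot_iff W).mpr ⟨xi, (hmem xi).mpr hxiY, h⟩
  have hWt : W ≠ ⊤ := by
    intro h
    apply hYt
    rw [eq_top_iff]
    intro z _
    have hre : (fun i => (z i).re : Vr) ∈ W := h ▸ Submodule.mem_top
    have him : (fun i => (z i).im : Vr) ∈ W := h ▸ Submodule.mem_top
    have hz : z = ι (fun i => (z i).re) + Complex.I • ι (fun i => (z i).im) := by
      funext i
      simp only [ι, LinearMap.coe_mk, AddHom.coe_mk, Pi.add_apply, Pi.smul_apply, smul_eq_mul]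
      rw [mul_comm]
      exact (Complex.re_add_im (z i)).symm
    rw [hz]
    exact Submodule.add_mem _ ((hmem _).mp hre) (Submodule.smul_mem _ _ ((hmem _).mp him))
  refine ⟨W, hWne, ?_, ?_, ?_⟩
  · have hlt : Module.finrank ℝ W < Module.finrank ℝ Vr :=
      Submodule.finrank_lt hWt
    rw [Module.finrank_fin_fun] at hlt
    omega
  · intro w hw
    rw [hmem, ← mc_mulVec]
    exact hAY _ ((hmem w).mp hw)
  · intro w hw
    rw [hmem, ← mc_mulVec]
    exact hTY _ ((hmem w).mp hw)

end

end TurnoverProof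

/-- Every semisimple representation `ρ : Γ → SL(4,ℝ)` of the turnover group admits an
invariant subspace of dimension `1` or `2`; in particular it is not irreducible. -/
theorem turnover_rep_not_irreducible
    (ρ : TurnoverGroup →* Matrix.SpecialLinearGroup (Fin 4) ℝ)
    (hss : IsSemisimpleRep ρ) :
    ∃ W : Submodule ℝ (Fin 4 → ℝ),
      (∀ γ : TurnoverGroup, ∀ w ∈ W, (ρ γ : Matrix (Fin 4) (Fin 4) ℝ) *ᵥ w ∈ W) ∧
      (Module.finrank ℝ W = 1 ∨ Module.finrank ℝ W = 2) := by
  classical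
  open TurnoverProof in
  have hrel : ∀ r ∈ turnoverRels, PresentedGroup.mk turnoverRels r = 1 := by
    intro r hr
    exact (QuotientGroup.eq_one_iff r).mpr (Subgroup.subset_normalClosure hr)
  have hmk0 : (PresentedGroup.of 0 : TurnoverGroup) =
      PresentedGroup.mk turnoverRels (FreeGroup.of 0) := rfl
  have hmk1 : (PresentedGroup.of 1 : TurnoverGroup) =
      PresentedGroup.mk turnoverRels (FreeGroup.of 1) := rfl
  have ha1 : (PresentedGroup.of 0 : TurnoverGroup) ^ 3 = 1 := by
    rw [hmk0, ← _root_.map_pow]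
    exact hrel _ (by simp [turnoverRels])
  have hb1 : (PresentedGroup.of 1 : TurnoverGroup) ^ 3 = 1 := by
    rw [hmk1, ← _root_.map_pow]
    exact hrel _ (by simp [turnoverRels])
  have hab1 : ((PresentedGroup.of 0 : TurnoverGroup) * PresentedGroup.of 1) ^ 3 = 1 := by
    rw [hmk0, hmk1, ← _root_.map_mul, ← _root_.map_pow]
    exact hrel _ (by simp [turnoverRels])
  set ga := ρ (PresentedGroup.of 0) with hga
  set gb := ρ (PresentedGroup.of 1) with hgb
  have hA3 : ga ^ 3 = 1 := by rw [hga, ← _root_.map_pow, ha1, _root_.map_one]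
  have hB3 : gb ^ 3 = 1 := by rw [hgb, ← _root_.map_pow, hb1, _root_.map_one]
  have hAB3 : (ga * gb) ^ 3 = 1 := by
    rw [hga, hgb, ← _root_.map_mul, ← _root_.map_pow, hab1, _root_.map_one]
  obtain ⟨G1, G4⟩ := TurnoverProof.turnover_idents hA3 hB3 hAB3
  set gt := ga * gb⁻¹ with hgt
  set gs := ga * gt * ga⁻¹ with hgs
  set gr := (gt * gs)⁻¹ with hgr
  have hATs : ga * gt = gs * ga := by rw [hgs]; group
  have hR1 : gr * (gt * gs) = 1 := by rw [hgr]; group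
  have hTB : gt * gb = ga := by rw [hgt]; group
  have hA3' : (ga * ga) * ga = 1 := by
    have h := hA3
    rw [pow_succ, pow_succ, pow_one] at h
    exact h
  -- transfer to complexified matrices
  have slc_mul : ∀ g h : Matrix.SpecialLinearGroup (Fin 4) ℝ,
      TurnoverProof.mc ↑(g * h) = TurnoverProof.mc ↑g * TurnoverProof.mc ↑h := by
    intro g h
    rw [Matrix.SpecialLinearGroup.coe_mul, TurnoverProof.mc_mul]
  have slc_one : TurnoverProof.mc (↑(1 : Matrix.SpecialLinearGroup (Fin 4) ℝ)) = 1 := by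
    rw [Matrix.SpecialLinearGroup.coe_one, TurnoverProof.mc_one]
  have hTSm : TurnoverProof.mc ↑gt * TurnoverProof.mc ↑gs
      = TurnoverProof.mc ↑gs * TurnoverProof.mc ↑gt := by
    rw [← slc_mul, ← slc_mul, G1]
  have hATm : TurnoverProof.mc ↑ga * TurnoverProof.mc ↑gt
      = TurnoverProof.mc ↑gs * TurnoverProof.mc ↑ga := by
    rw [← slc_mul, ← slc_mul, hATs]
  have hARm : TurnoverProof.mc ↑ga * TurnoverProof.mc ↑gr
      = TurnoverProof.mc ↑gt * TurnoverProof.mc ↑ga := by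
    rw [← slc_mul, ← slc_mul, G4]
  have hRm : TurnoverProof.mc ↑gr * (TurnoverProof.mc ↑gt * TurnoverProof.mc ↑gs) = 1 := by
    rw [← slc_mul, ← slc_mul, hR1, slc_one]
  have hA3m : (TurnoverProof.mc ↑ga * TurnoverProof.mc ↑ga) * TurnoverProof.mc ↑ga = 1 := by
    rw [← slc_mul, ← slc_mul, hA3', slc_one]
  obtain ⟨Y, hY0, hYt, hYconj, hYA, hYT⟩ :=
    TurnoverProof.exists_Y (TurnoverProof.mc ↑ga) (TurnoverProof.mc ↑gt)
      (TurnoverProof.mc ↑gs) (TurnoverProof.mc ↑gr) hTSm hATm hARm hRm hA3m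
      (TurnoverProof.κ_mulVec _) (TurnoverProof.κ_mulVec _) (TurnoverProof.κ_mulVec _)
  obtain ⟨W, hW0, hW3, hWA, hWT⟩ := TurnoverProof.realize ↑ga ↑gt Y hY0 hYt hYconj hYA hYT
  -- invariance under `gb`
  have hTinv : ∀ w ∈ W, (↑(gt⁻¹) : Matrix (Fin 4) (Fin 4) ℝ) *ᵥ w ∈ W :=
    TurnoverProof.invariant_inv
      (by rw [← Matrix.SpecialLinearGroup.coe_mul]; simp)
      (by rw [← Matrix.SpecialLinearGroup.coe_mul]; simp) W hWT
  have hWB : ∀ w ∈ W, (↑gb : Matrix (Fin 4) (Fin 4) ℝ) *ᵥ w ∈ W := by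
    intro w hw
    have h1 : (↑gb : Matrix (Fin 4) (Fin 4) ℝ) *ᵥ w
        = (↑(gt⁻¹) : Matrix (Fin 4) (Fin 4) ℝ) *ᵥ ((↑ga : Matrix (Fin 4) (Fin 4) ℝ) *ᵥ w) := by
      rw [Matrix.mulVec_mulVec, ← Matrix.SpecialLinearGroup.coe_mul]
      have : gt⁻¹ * ga = gb := by rw [← hTB]; group
      rw [this]
    rw [h1]
    exact hTinv _ (hWA w hw)
  -- invariance under the whole group
  have hInv : ∀ γ : TurnoverGroup, ∀ w ∈ W,
      (ρ γ : Matrix (Fin 4) (Fin 4) ℝ) *ᵥ w ∈ W := by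
    have hgen : ∀ z : FreeGroup (Fin 2), ∀ w ∈ W,
        (ρ (PresentedGroup.mk turnoverRels z) : Matrix (Fin 4) (Fin 4) ℝ) *ᵥ w ∈ W := by
      intro z
      induction z using FreeGroup.induction_on with
      | C1 =>
        intro w hw
        rw [_root_.map_one, _root_.map_one, Matrix.SpecialLinearGroup.coe_one, Matrix.one_mulVec]
        exact hw
      | of x =>
        fin_cases x
        · intro w hw; exact hWA w hw
        · intro w hw; exact hWB w hw
      | inv_of x ih =>
        intro w hw
        rw [_root_.map_inv, _root_.map_inv]
        exact TurnoverProof.invariant_inv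
          (by rw [← Matrix.SpecialLinearGroup.coe_mul]; simp)
          (by rw [← Matrix.SpecialLinearGroup.coe_mul]; simp) W ih w hw
      | mul x y ihx ihy =>
        intro w hw
        rw [_root_.map_mul, _root_.map_mul, Matrix.SpecialLinearGroup.coe_mul, ← Matrix.mulVec_mulVec]
        exact ihx _ (ihy w hw)
    intro γ
    exact PresentedGroup.induction_on
      (C := fun γ => ∀ w ∈ W, (ρ γ : Matrix (Fin 4) (Fin 4) ℝ) *ᵥ w ∈ W) γ hgen
  -- conclude by dimension count
  have hW1 : 1 ≤ Module.finrank ℝ W := by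
    have hnt : Nontrivial W := Submodule.nontrivial_iff_ne_bot.mpr hW0
    have h := Module.finrank_pos_iff (R := ℝ) (M := W) |>.mpr hnt
    omega
  have hW3' : Module.finrank ℝ W ≤ 3 := hW3
  rcases (by omega : Module.finrank ℝ W = 1 ∨ Module.finrank ℝ W = 2 ∨
      Module.finrank ℝ W = 3) with h | h | h
  · exact ⟨W, hInv, Or.inl h⟩
  · exact ⟨W, hInv, Or.inr h⟩
  · obtain ⟨W', hW'inv, hcompl⟩ := hss W hInv
    have hsum := Submodule.finrank_add_eq_of_isCompl hcompl
    rw [Module.finrank_fin_fun, h] at hsum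
    have hfr : Module.finrank ℝ W' = 1 := by
      set n := Module.finrank ℝ W' with hn
      omega
    exact ⟨W', hW'inv, Or.inl hfr⟩
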